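/- Let d ≥ 1, let h be a complex-valued Schwartz function on ℝ^d, and let p ∈ MvPolynomial (Fin d) ℝ be a harmonic polynomial (∑_i pderiv i (pderiv i p) = 0). Then ∫_{ℝ^d} (eval at x of p) · (Δh)(x) dx = 0, where Δh(x) = ∑_{i=1}^d ∂²h/∂x_i²(x) is the Laplacian of h. -/

import Mathlib

open Real MeasureTheory MvPolynomial

/-- The Laplacian of `g : ℝ^d → ℂ`: the sum of the second directional derivatives of `g`
along the standard basis vectors. -/
noncomputable def laplacian {d : ℕ} (g : EuclideanSpace ℝ (Fin d) → ℂ)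
    (x : EuclideanSpace ℝ (Fin d)) : ℂ :=
  ∑ i : Fin d,
    fderiv ℝ (fun y => fderiv ℝ g y (EuclideanSpace.single i 1)) x (EuclideanSpace.single i 1)

section Aux

noncomputable def SchwartzMap.pderivCLM (𝕜 : Type*) {E F : Type*} [RCLike 𝕜]
    [NormedAddCommGroup E] [NormedSpace ℝ E] [NormedAddCommGroup F] [NormedSpace ℝ F]
    [NormedSpace 𝕜 F] [SMulCommClass ℝ 𝕜 F] (m : E) :
    SchwartzMap E F →L[𝕜] SchwartzMap E F :=
  LineDeriv.lineDerivOpCLM 𝕜 (SchwartzMap E F) m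

theorem SchwartzMap.pderivCLM_apply (𝕜 : Type*) {E F : Type*} [RCLike 𝕜]
    [NormedAddCommGroup E] [NormedSpace ℝ E] [NormedAddCommGroup F] [NormedSpace ℝ F]
    [NormedSpace 𝕜 F] [SMulCommClass ℝ 𝕜 F] (m : E) (f : SchwartzMap E F) (x : E) :
    SchwartzMap.pderivCLM 𝕜 m f x = fderiv ℝ f x m :=
  SchwartzMap.lineDerivOp_apply_eq_fderiv m f x

variable {d : ℕ}


noncomputable def Pf (p : MvPolynomial (Fin d) ℝ) (x : EuclideanSpace ℝ (Fin d)) : ℝ :=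
  eval (fun i => x i) p

lemma Pf_hasDerivAt (p : MvPolynomial (Fin d) ℝ) (i : Fin d) (y : Fin d → ℝ) :
    HasDerivAt (fun t : ℝ => eval (Function.update y i t) p) (eval y (pderiv i p)) (y i) := by
  induction p using MvPolynomial.induction_on with
  | C a => simpa using hasDerivAt_const (y i) a
  | add p q hp hq => simp only [map_add]; exact hp.add hq
  | mul_X p j hp =>
    rcases eq_or_ne j i with rfl | hji
    · have := hp.mul (hasDerivAt_id (y j))
      simp only [eval_mul, eval_X, pderiv_mul, pderiv_X_self, eval_add, eval_mul, map_one,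
        Function.update_eq_self, id_eq] at this ⊢
      refine this.congr_of_eventuallyEq (Filter.Eventually.of_forall fun t => ?_)
      simp [Function.update_self]
    · have := hp.mul_const (y j)
      simp only [eval_mul, eval_X, pderiv_mul, pderiv_X_of_ne hji, eval_add, eval_mul,
        Function.update_eq_self, mul_zero, add_zero, eval_zero] at this ⊢
      refine this.congr_of_eventuallyEq (Filter.Eventually.of_forall fun t => ?_)
      simp [Function.update_of_ne hji]

lemma Pf_hasLineDerivAt (p : MvPolynomial (Fin d) ℝ) (i : Fin d)
    (x : EuclideanSpace ℝ (Fin d)) :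
    HasLineDerivAt ℝ (Pf p) (Pf (pderiv i p) x) x (EuclideanSpace.single i 1) := by
  have h0 : ∀ t : ℝ, (fun j => (x + t • EuclideanSpace.single i (1 : ℝ)) j)
      = Function.update (fun j => x j) i (x i + t) := by
    intro t; funext j
    rcases eq_or_ne j i with rfl | hj
    · simp [EuclideanSpace.single_apply]
    · simp [EuclideanSpace.single_apply, hj, Function.update_of_ne hj]
  have key := Pf_hasDerivAt p i (fun j => x j)
  have comp : HasDerivAt (fun t : ℝ => x i + t) 1 0 := by
    simpa using (hasDerivAt_id (0 : ℝ)).const_add (x i)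
  have key' : HasDerivAt (fun t : ℝ => eval (Function.update (fun j => x j) i t) p)
      (eval (fun j => x j) (pderiv i p)) (x i + 0) := by
    rw [add_zero]; exact key
  have hcomp := key'.comp 0 comp
  show HasDerivAt (fun t : ℝ => Pf p (x + t • EuclideanSpace.single i 1))
      (Pf (pderiv i p) x) 0
  have : (fun t : ℝ => Pf p (x + t • EuclideanSpace.single i 1))
      = (fun t : ℝ => eval (Function.update (fun j => x j) i t) p) ∘ (fun t : ℝ => x i + t) := by
    funext t
    simp only [Pf, Function.comp]
    rw [h0 t]
  rw [this]
  simpa [Pf] using hcomp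

lemma Pf_continuous (p : MvPolynomial (Fin d) ℝ) : Continuous (Pf (d := d) p) := by
  induction p using MvPolynomial.induction_on with
  | C a =>
    have : Pf (d := d) (C a) = fun _ => a := funext fun x => by simp [Pf]
    rw [this]; exact continuous_const
  | add p q hp hq =>
    have : Pf (d := d) (p + q) = fun x => Pf p x + Pf q x := by funext x; simp [Pf]
    rw [this]; exact hp.add hq
  | mul_X p j hp =>
    have : Pf (d := d) (p * X j) = fun x => Pf p x * x j := by funext x; simp [Pf]
    rw [this]; exact hp.mul (EuclideanSpace.proj (𝕜 := ℝ) j).continuous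

lemma abs_apply_le_norm (x : EuclideanSpace ℝ (Fin d)) (j : Fin d) : |x j| ≤ ‖x‖ := by
  rw [EuclideanSpace.norm_eq, ← Real.sqrt_sq_eq_abs]
  apply Real.sqrt_le_sqrt
  have := Finset.single_le_sum (f := fun i => ‖x i‖ ^ 2)
    (fun i _ => by positivity) (Finset.mem_univ j)
  simpa [Real.norm_eq_abs, sq_abs] using this

lemma Pf_bound (p : MvPolynomial (Fin d) ℝ) :
    ∃ (C : ℝ) (n : ℕ), 0 ≤ C ∧ ∀ x : EuclideanSpace ℝ (Fin d),
      |Pf p x| ≤ C * (1 + ‖x‖) ^ n := by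
  induction p using MvPolynomial.induction_on with
  | C a => exact ⟨|a|, 0, abs_nonneg a, fun x => by simp [Pf]⟩
  | add p q hp hq =>
    obtain ⟨C₁, n₁, hC₁, H₁⟩ := hp
    obtain ⟨C₂, n₂, hC₂, H₂⟩ := hq
    refine ⟨C₁ + C₂, max n₁ n₂, by linarith, fun x => ?_⟩
    have hb : (1 : ℝ) ≤ 1 + ‖x‖ := by linarith [norm_nonneg x]
    have e1 : (1 + ‖x‖) ^ n₁ ≤ (1 + ‖x‖) ^ max n₁ n₂ := pow_le_pow_right₀ hb (le_max_left _ _)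
    have e2 : (1 + ‖x‖) ^ n₂ ≤ (1 + ‖x‖) ^ max n₁ n₂ := pow_le_pow_right₀ hb (le_max_right _ _)
    have : |Pf (p + q) x| ≤ |Pf p x| + |Pf q x| := by
      simp only [Pf, map_add]; exact abs_add_le _ _
    calc |Pf (p + q) x| ≤ |Pf p x| + |Pf q x| := this
      _ ≤ C₁ * (1 + ‖x‖) ^ max n₁ n₂ + C₂ * (1 + ‖x‖) ^ max n₁ n₂ := by
          exact add_le_add ((H₁ x).trans (mul_le_mul_of_nonneg_left e1 hC₁))
            ((H₂ x).trans (mul_le_mul_of_nonneg_left e2 hC₂))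
      _ = (C₁ + C₂) * (1 + ‖x‖) ^ max n₁ n₂ := by ring
  | mul_X p j hp =>
    obtain ⟨C, n, hC, H⟩ := hp
    refine ⟨C, n + 1, hC, fun x => ?_⟩
    have : |Pf (p * X j) x| = |Pf p x| * |x j| := by simp [Pf, abs_mul]
    rw [this, pow_succ]
    have hxj : |x j| ≤ 1 + ‖x‖ := (abs_apply_le_norm x j).trans (by linarith [norm_nonneg x])
    calc |Pf p x| * |x j| ≤ (C * (1 + ‖x‖) ^ n) * (1 + ‖x‖) := by
          gcongr; exact H x
      _ = C * ((1 + ‖x‖) ^ n * (1 + ‖x‖)) := by ring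

lemma one_add_pow_le (a : ℝ) (ha : 0 ≤ a) (n : ℕ) : (1 + a) ^ n ≤ 2 ^ n * (1 + a ^ n) := by
  rcases le_total a 1 with hle | hle
  · calc (1 + a) ^ n ≤ 2 ^ n := pow_le_pow_left₀ (by linarith) (by linarith) n
      _ ≤ 2 ^ n * (1 + a ^ n) := le_mul_of_one_le_right (by positivity) (by linarith [pow_nonneg ha n])
  · calc (1 + a) ^ n ≤ (2 * a) ^ n := pow_le_pow_left₀ (by linarith) (by linarith) n
      _ = 2 ^ n * a ^ n := mul_pow 2 a n
      _ ≤ 2 ^ n * (1 + a ^ n) := by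
          have : a ^ n ≤ 1 + a ^ n := by linarith
          exact mul_le_mul_of_nonneg_left this (by positivity)

lemma Pf_integrable_smul (q : MvPolynomial (Fin d) ℝ)
    (g : SchwartzMap (EuclideanSpace ℝ (Fin d)) ℂ) :
    Integrable (fun x => Pf q x • g x) (volume : Measure (EuclideanSpace ℝ (Fin d))) := by
  obtain ⟨C, n, hC, hb⟩ := Pf_bound q
  have hmeas : AEStronglyMeasurable (fun x => Pf q x • g x)
      (volume : Measure (EuclideanSpace ℝ (Fin d))) :=
    ((Pf_continuous q).smul g.continuous).aestronglyMeasurable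
  have I1 : Integrable (fun x : EuclideanSpace ℝ (Fin d) => ‖x‖ ^ n * ‖g x‖) volume :=
    g.integrable_pow_mul volume n
  have I2 : Integrable (fun x : EuclideanSpace ℝ (Fin d) => ‖g x‖) volume := g.integrable.norm
  refine Integrable.mono' (((I2.add I1)).const_mul (C * 2 ^ n)) hmeas ?_
  filter_upwards with x
  have h1 : ‖Pf q x • g x‖ = |Pf q x| * ‖g x‖ := by
    rw [norm_smul, Real.norm_eq_abs]
  rw [h1]
  have h2 : |Pf q x| * ‖g x‖ ≤ (C * (1 + ‖x‖) ^ n) * ‖g x‖ :=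
    mul_le_mul_of_nonneg_right (hb x) (norm_nonneg _)
  have h3 : (C * (1 + ‖x‖) ^ n) * ‖g x‖ ≤ (C * (2 ^ n * (1 + ‖x‖ ^ n))) * ‖g x‖ := by
    have := one_add_pow_le ‖x‖ (norm_nonneg x) n
    have := mul_le_mul_of_nonneg_left this hC
    exact mul_le_mul_of_nonneg_right this (norm_nonneg _)
  calc |Pf q x| * ‖g x‖ ≤ (C * (2 ^ n * (1 + ‖x‖ ^ n))) * ‖g x‖ := h2.trans h3
    _ = C * 2 ^ n * (‖g x‖ + ‖x‖ ^ n * ‖g x‖) := by ring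

lemma key_ibp (q : MvPolynomial (Fin d) ℝ) (g : SchwartzMap (EuclideanSpace ℝ (Fin d)) ℂ)
    (i : Fin d) :
    ∫ x : EuclideanSpace ℝ (Fin d), Pf q x • fderiv ℝ (⇑g) x (EuclideanSpace.single i 1)
      = - ∫ x : EuclideanSpace ℝ (Fin d), Pf (pderiv i q) x • g x := by
  have hg : ∀ x, HasLineDerivAt ℝ (⇑g) ((SchwartzMap.pderivCLM ℝ
      (EuclideanSpace.single i (1 : ℝ)) g) x) x (EuclideanSpace.single i 1) := by
    intro x
    have := ((g.differentiableAt (x := x)).hasFDerivAt).hasLineDerivAt (EuclideanSpace.single i (1 : ℝ))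
    simpa [SchwartzMap.pderivCLM_apply] using this
  have main := integral_bilinear_hasLineDerivAt_right_eq_neg_left_of_integrable
    (μ := (volume : Measure (EuclideanSpace ℝ (Fin d))))
    (B := (ContinuousLinearMap.lsmul ℝ ℝ : ℝ →L[ℝ] ℂ →L[ℝ] ℂ))
    (f := Pf q) (f' := fun x => Pf (pderiv i q) x) (g := ⇑g)
    (g' := ⇑(SchwartzMap.pderivCLM ℝ (EuclideanSpace.single i (1 : ℝ)) g))
    (v := EuclideanSpace.single i 1)
    (by simpa using Pf_integrable_smul (pderiv i q) g)
    (by simpa using Pf_integrable_smul q (SchwartzMap.pderivCLM ℝ (EuclideanSpace.single i (1 : ℝ)) g))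
    (by simpa using Pf_integrable_smul q g)
    (fun x _ => Pf_hasLineDerivAt q i x) (fun x _ => hg x)
  simpa [SchwartzMap.pderivCLM_apply] using main

theorem harmonic_poly_annihilates_laplacian' (d : ℕ) (hd : 1 ≤ d)
    (h : SchwartzMap (EuclideanSpace ℝ (Fin d)) ℂ)
    (p : MvPolynomial (Fin d) ℝ)
    (hp : ∑ i : Fin d, pderiv i (pderiv i p) = 0) :
    ∫ x : EuclideanSpace ℝ (Fin d),
      ((eval (fun i => x i) p : ℝ) : ℂ) *
        (∑ i : Fin d, fderiv ℝ (fun y => fderiv ℝ (⇑h) y (EuclideanSpace.single i 1)) x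
          (EuclideanSpace.single i 1)) = 0 := by
  have hco : ∀ g : SchwartzMap (EuclideanSpace ℝ (Fin d)) ℂ, ∀ i : Fin d,
      (fun y => fderiv ℝ (⇑g) y (EuclideanSpace.single i (1 : ℝ)))
        = ⇑(SchwartzMap.pderivCLM ℝ (EuclideanSpace.single i (1 : ℝ)) g) := by
    intro g i; funext y; rw [SchwartzMap.pderivCLM_apply]
  have step : ∀ i : Fin d,
      ∫ x : EuclideanSpace ℝ (Fin d), Pf p x •
          fderiv ℝ (fun y => fderiv ℝ (⇑h) y (EuclideanSpace.single i 1)) x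
            (EuclideanSpace.single i 1)
        = ∫ x : EuclideanSpace ℝ (Fin d), Pf (pderiv i (pderiv i p)) x • h x := by
    intro i
    rw [show (fun y => fderiv ℝ (⇑h) y (EuclideanSpace.single i (1 : ℝ)))
        = ⇑(SchwartzMap.pderivCLM ℝ (EuclideanSpace.single i (1 : ℝ)) h) from hco h i]
    rw [key_ibp p (SchwartzMap.pderivCLM ℝ (EuclideanSpace.single i (1 : ℝ)) h) i]
    have h2 : ∫ x : EuclideanSpace ℝ (Fin d),
        Pf (pderiv i p) x • (SchwartzMap.pderivCLM ℝ (EuclideanSpace.single i (1 : ℝ)) h) x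
        = - ∫ x : EuclideanSpace ℝ (Fin d), Pf (pderiv i (pderiv i p)) x • h x := by
      rw [← hco h i]
      exact key_ibp (pderiv i p) h i
    rw [h2, neg_neg]
  have expand : (fun x : EuclideanSpace ℝ (Fin d) => ((eval (fun i => x i) p : ℝ) : ℂ) *
        (∑ i : Fin d, fderiv ℝ (fun y => fderiv ℝ (⇑h) y (EuclideanSpace.single i 1)) x
          (EuclideanSpace.single i 1)))
      = (fun x : EuclideanSpace ℝ (Fin d) => ∑ i : Fin d, Pf p x •
          fderiv ℝ (fun y => fderiv ℝ (⇑h) y (EuclideanSpace.single i 1)) x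
            (EuclideanSpace.single i 1)) := by
    funext x
    rw [Finset.mul_sum]
    refine Finset.sum_congr rfl fun i _ => ?_
    rw [Complex.real_smul]
    rfl
  rw [expand]
  have hInt : ∀ i : Fin d, Integrable (fun x : EuclideanSpace ℝ (Fin d) => Pf p x •
      fderiv ℝ (fun y => fderiv ℝ (⇑h) y (EuclideanSpace.single i 1)) x
        (EuclideanSpace.single i 1)) volume := by
    intro i
    have : (fun x : EuclideanSpace ℝ (Fin d) => Pf p x •
        fderiv ℝ (fun y => fderiv ℝ (⇑h) y (EuclideanSpace.single i 1)) x
          (EuclideanSpace.single i 1))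
        = fun x => Pf p x • (SchwartzMap.pderivCLM ℝ (EuclideanSpace.single i (1 : ℝ))
            (SchwartzMap.pderivCLM ℝ (EuclideanSpace.single i (1 : ℝ)) h)) x := by
      funext x
      rw [hco h i, SchwartzMap.pderivCLM_apply]
    rw [this]
    exact Pf_integrable_smul p _
  rw [integral_finset_sum _ (fun i _ => hInt i)]
  have : ∀ i ∈ Finset.univ, (∫ x : EuclideanSpace ℝ (Fin d), Pf p x •
      fderiv ℝ (fun y => fderiv ℝ (⇑h) y (EuclideanSpace.single i 1)) x
        (EuclideanSpace.single i 1))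
      = ∫ x : EuclideanSpace ℝ (Fin d), Pf (pderiv i (pderiv i p)) x • h x :=
    fun i _ => step i
  rw [Finset.sum_congr rfl this,
    ← integral_finset_sum _ (fun i _ => Pf_integrable_smul (pderiv i (pderiv i p)) h)]
  have hz : (fun x : EuclideanSpace ℝ (Fin d) =>
      ∑ i : Fin d, Pf (pderiv i (pderiv i p)) x • h x) = fun _ => (0 : ℂ) := by
    funext x
    rw [← Finset.sum_smul]
    have : ∑ i : Fin d, Pf (pderiv i (pderiv i p)) x = 0 := by
      have : ∑ i : Fin d, Pf (pderiv i (pderiv i p)) x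
          = Pf (∑ i : Fin d, pderiv i (pderiv i p)) x := by
        simp [Pf, map_sum]
      rw [this, hp]
      simp [Pf]
    rw [this, zero_smul]
  rw [hz, integral_zero]


end Aux

/-- A harmonic polynomial, viewed as a tempered distribution, annihilates the image of the
Laplacian acting on Schwartz functions. -/
theorem harmonic_poly_annihilates_laplacian (d : ℕ) (hd : 1 ≤ d)
    (h : SchwartzMap (EuclideanSpace ℝ (Fin d)) ℂ)
    (p : MvPolynomial (Fin d) ℝ)
    (hp : ∑ i : Fin d, pderiv i (pderiv i p) = 0) :
    ∫ x : EuclideanSpace ℝ (Fin d),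
      ((eval (fun i => x i) p : ℝ) : ℂ) * laplacian (⇑h) x = 0 := by
  unfold laplacian
  exact harmonic_poly_annihilates_laplacian' d hd h p hp
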